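/- For every set S of positive reals, the class of finite convexly ordered ultrametric spaces with distances in S has the ordering property: for every finite ultrametric space X with nonzero distances in S there exists a finite ultrametric space Y with nonzero distances in S such that for every convex linear ordering <^X on X and every convex linear ordering <^Y on Y, the ordered space (Y,<^Y) contains a copy of (X,<^X). -/

import Mathlib

/-- A finite ultrametric space with all nonzero distances in `S`. -/
structure FinUltra (S : Set ℝ) where
  n : ℕ
  d : Fin n → Fin n → ℝ
  d_self : ∀ x, d x x = 0
  d_symm : ∀ x y, d x y = d y x
  d_mem : ∀ x y, x ≠ y → d x y ∈ S
  ultra : ∀ x y z, d x z ≤ max (d x y) (d y z)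

/-- `r` is a strict total order (irreflexive, transitive, trichotomous). -/
def IsSTO {X : Type*} (r : X → X → Prop) : Prop :=
  (∀ x, ¬ r x x) ∧ (∀ x y z, r x y → r y z → r x z) ∧ (∀ x y, r x y ∨ x = y ∨ r y x)

/-- `r` is a convex linear ordering with respect to the distance `d` : a strict total
order for which every closed metric ball is an interval (equivalently,
`r x y → r y z → d x y ≤ d x z ∧ d y z ≤ d x z`). -/
def IsConvexSTO {X : Type*} (d : X → X → ℝ) (r : X → X → Prop) : Prop :=
  IsSTO r ∧ ∀ x y z, r x y → r y z → d x y ≤ d x z ∧ d y z ≤ d x z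

/-- `A` is a copy of the ordered space `(X, rX)` inside `(Z, rZ)` : the image of an
isometric, order-preserving embedding. -/
def IsOrdCopy {S : Set ℝ} (X Z : FinUltra S) (rX : Fin X.n → Fin X.n → Prop)
    (rZ : Fin Z.n → Fin Z.n → Prop) (A : Set (Fin Z.n)) : Prop :=
  ∃ f : Fin X.n → Fin Z.n, Set.range f = A ∧
    (∀ a b, Z.d (f a) (f b) = X.d a b) ∧ (∀ a b, rX a b → rZ (f a) (f b))

/-- `A` is an isometric copy of `X` inside `Z`. -/
def IsCopy {S : Set ℝ} (X Z : FinUltra S) (A : Set (Fin Z.n)) : Prop :=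
  ∃ f : Fin X.n → Fin Z.n, Set.range f = A ∧ ∀ a b, Z.d (f a) (f b) = X.d a b

/-- The number τ(X) = |cLO(X)| / |iso(X)|. -/
noncomputable def tau (S : Set ℝ) (X : FinUltra S) : ℕ :=
  Nat.card {r : Fin X.n → Fin X.n → Prop // IsConvexSTO X.d r} /
    Nat.card {g : Fin X.n ≃ Fin X.n // ∀ a b, X.d (g a) (g b) = X.d a b}

namespace OrdUltraAux

variable {α : Type*} {r : α → α → Prop}

lemma sto_asymm (h : IsSTO r) {a b : α} (hab : r a b) : ¬ r b a :=
  fun hba => h.1 a (h.2.1 a b a hab hba)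

noncomputable def linOrder (h : IsSTO r) : LinearOrder α where
  le a b := r a b ∨ a = b
  lt := r
  le_refl a := Or.inr rfl
  le_trans a b c hab hbc := by
    rcases hab with hab | rfl
    · rcases hbc with hbc | rfl
      · exact Or.inl (h.2.1 _ _ _ hab hbc)
      · exact Or.inl hab
    · exact hbc
  le_antisymm a b hab hba := by
    rcases hab with hab | h1
    · rcases hba with hba | h2
      · exact absurd hba (sto_asymm h hab)
      · exact h2.symm
    · exact h1
  le_total a b := by
    rcases h.2.2 a b with hab | heq | hba
    · exact Or.inl (Or.inl hab)
    · exact Or.inl (Or.inr heq)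
    · exact Or.inr (Or.inl hba)
  lt_iff_le_not_ge a b := by
    constructor
    · intro hab
      refine ⟨Or.inl hab, ?_⟩
      rintro (hba | heq)
      · exact sto_asymm h hab hba
      · exact h.1 a (heq ▸ hab)
    · rintro ⟨hab | heq, hnba⟩
      · exact hab
      · exact absurd (Or.inr heq.symm) hnba
  toDecidableLE a b := Classical.propDecidable _

lemma linOrder_lt_iff (h : IsSTO r) {a b : α} :
    (letI := linOrder h; a < b) ↔ r a b := Iff.rfl

lemma exists_min [Fintype α] (h : IsSTO r) (T : Finset α) (hT : T.Nonempty) :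
    ∃ v ∈ T, ∀ w ∈ T, w ≠ v → r v w := by
  letI := linOrder h
  refine ⟨T.min' hT, T.min'_mem hT, fun w hw hne => ?_⟩
  have hle : T.min' hT ≤ w := T.min'_le w hw
  rcases hle with hlt | heq
  · exact hlt
  · exact absurd heq.symm hne

/-- enumerate a finite STO in increasing order -/
lemma exists_enum [Fintype α] {n : ℕ} (hn : Fintype.card α = n) (h : IsSTO r) :
    ∃ x : Fin n ≃ α, ∀ i j : Fin n, i < j → r (x i) (x j) := by
  letI := linOrder h
  refine ⟨(monoEquivOfFin α hn).toEquiv, fun i j hij => ?_⟩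
  exact (monoEquivOfFin α hn).strictMono hij

section Interval

variable {α : Type*} {d : α → α → ℝ} {r : α → α → Prop}

/-- move the right endpoint closer -/
lemma move_right (hsym : ∀ a b, d a b = d b a) (hc : IsConvexSTO d r)
    {w v v' : α} (hwv : r w v) (hlt : d v v' < d w v) : r w v' := by
  rcases hc.1.2.2 w v' with h1 | h2 | h3
  · exact h1
  · exfalso; subst h2; rw [hsym v w] at hlt; exact lt_irrefl _ hlt
  · exfalso
    have := (hc.2 v' w v h3 hwv).2
    rw [hsym v' v] at this
    exact absurd (lt_of_le_of_lt this hlt) (lt_irrefl _)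

/-- move the left endpoint closer -/
lemma move_left (hc : IsConvexSTO d r)
    {w w' v : α} (hwv : r w v) (hlt : d w w' < d w v) : r w' v := by
  rcases hc.1.2.2 w' v with h1 | h2 | h3
  · exact h1
  · exfalso; subst h2; exact lt_irrefl _ hlt
  · exfalso
    have := (hc.2 w v w' hwv h3).1
    exact absurd (lt_of_le_of_lt this hlt) (lt_irrefl _)

/-- distances between chain elements are determined by consecutive distances -/
lemma chain_dist_eq {β : Type*} (d2 : β → β → ℝ) (r2 : β → β → Prop)
    (hc1 : IsConvexSTO d r) (hu1 : ∀ x y z, d x z ≤ max (d x y) (d y z))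
    (hc2 : IsConvexSTO d2 r2) (hu2 : ∀ x y z, d2 x z ≤ max (d2 x y) (d2 y z))
    {n : ℕ} (z : Fin n → α) (y : Fin n → β)
    (hz : ∀ i j : Fin n, (i : ℕ) < j → r (z i) (z j))
    (hy : ∀ i j : Fin n, (i : ℕ) < j → r2 (y i) (y j))
    (hcons : ∀ (i : ℕ) (h : i + 1 < n),
      d (z ⟨i, Nat.lt_of_succ_lt h⟩) (z ⟨i + 1, h⟩) = d2 (y ⟨i, Nat.lt_of_succ_lt h⟩) (y ⟨i + 1, h⟩)) :
    ∀ i j : Fin n, (i : ℕ) < j → d (z i) (z j) = d2 (y i) (y j) := by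
  suffices H : ∀ g : ℕ, ∀ i j : Fin n, (j : ℕ) = (i : ℕ) + g + 1 → d (z i) (z j) = d2 (y i) (y j) by
    intro i j hij
    obtain ⟨g, hg⟩ := Nat.exists_eq_add_of_lt hij
    exact H g i j (by omega)
  intro g
  induction g with
  | zero =>
    intro i j hj
    have h1 : (i : ℕ) + 1 < n := hj ▸ j.isLt
    have hi' : i = ⟨(i : ℕ), Nat.lt_of_succ_lt h1⟩ := Fin.ext rfl
    have hj' : j = ⟨(i : ℕ) + 1, h1⟩ := Fin.ext (by simp; omega)
    rw [hi', hj']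
    exact hcons i h1
  | succ g ih =>
    intro i j hj
    have hpn : (i : ℕ) + g + 1 < n := by omega
    set p : Fin n := ⟨(i : ℕ) + g + 1, hpn⟩ with hp
    have hip : (i : ℕ) < (p : ℕ) := by simp [hp]
    have hpj : (p : ℕ) < (j : ℕ) := by simp [hp]; omega
    have e1 : d (z i) (z p) = d2 (y i) (y p) := ih i p rfl
    have e2 : d (z p) (z j) = d2 (y p) (y j) := by
      have h1 : (p : ℕ) + 1 < n := by simp [hp]; omega
      have hpp : p = ⟨(p : ℕ), Nat.lt_of_succ_lt h1⟩ := Fin.ext rfl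
      have hjj : j = ⟨(p : ℕ) + 1, h1⟩ := Fin.ext (by simp [hp]; omega)
      rw [hpp, hjj]
      exact hcons p h1
    have key1 : d (z i) (z j) = max (d (z i) (z p)) (d (z p) (z j)) := by
      apply le_antisymm (hu1 _ _ _)
      have hcv := hc1.2 (z i) (z p) (z j) (hz i p hip) (hz p j hpj)
      exact max_le hcv.1 hcv.2
    have key2 : d2 (y i) (y j) = max (d2 (y i) (y p)) (d2 (y p) (y j)) := by
      apply le_antisymm (hu2 _ _ _)
      have hcv := hc2.2 (y i) (y p) (y j) (hy i p hip) (hy p j hpj)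
      exact max_le hcv.1 hcv.2
    rw [key1, key2, e1, e2]

end Interval

section Greedy

open Finset

attribute [local instance 10] Classical.propDecidable

variable {m k : ℕ}

/-- set of coordinates where `u` and `v` differ. -/
def levelSet (u v : Fin k → Fin m) : Finset (Fin k) :=
  Finset.univ.filter fun i => u i ≠ v i

lemma levelSet_nonempty {u v : Fin k → Fin m} (h : u ≠ v) : (levelSet u v).Nonempty := by
  obtain ⟨i, hi⟩ := Function.ne_iff.mp h
  exact ⟨i, by simp [levelSet, hi]⟩

lemma mem_levelSet {u v : Fin k → Fin m} {i : Fin k} : i ∈ levelSet u v ↔ u i ≠ v i := by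
  simp [levelSet]

/-- the tree ultrametric on `Fin k → Fin m` determined by the values `e`. -/
noncomputable def dV (e : Fin k → ℝ) (u v : Fin k → Fin m) : ℝ :=
  if h : u = v then 0 else e ((levelSet u v).max' (levelSet_nonempty h))

lemma dV_self (e : Fin k → ℝ) (u : Fin k → Fin m) : dV e u u = 0 := dif_pos rfl

lemma dV_symm (e : Fin k → ℝ) (u v : Fin k → Fin m) : dV e u v = dV e v u := by
  rcases eq_or_ne u v with rfl | h
  · rfl
  · rw [dV, dV, dif_neg h, dif_neg (Ne.symm h)]
    have hmax : (levelSet u v).max' (levelSet_nonempty h) =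
        (levelSet v u).max' (levelSet_nonempty (Ne.symm h)) := by
      apply le_antisymm
      · apply Finset.le_max'
        have := Finset.max'_mem (levelSet u v) (levelSet_nonempty h)
        rw [mem_levelSet] at this ⊢
        exact this.symm
      · apply Finset.le_max'
        have := Finset.max'_mem (levelSet v u) (levelSet_nonempty (Ne.symm h))
        rw [mem_levelSet] at this ⊢
        exact this.symm
    rw [hmax]

lemma dV_eq_of (e : Fin k → ℝ) {u v : Fin k → Fin m} {i : Fin k} (hi : u i ≠ v i)
    (hab : ∀ i', i < i' → u i' = v i') : dV e u v = e i := by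
  have hne : u ≠ v := fun h => hi (by rw [h])
  rw [dV, dif_neg hne]
  congr 1
  have h1 : (levelSet u v).max' (levelSet_nonempty hne) ∈ levelSet u v :=
    Finset.max'_mem _ _
  rw [mem_levelSet] at h1
  have h2 : i ≤ (levelSet u v).max' (levelSet_nonempty hne) :=
    Finset.le_max' _ _ (mem_levelSet.mpr hi)
  rcases lt_or_eq_of_le h2 with hlt | heq
  · exact absurd (hab _ hlt) h1
  · exact heq.symm

lemma dV_nonneg (e : Fin k → ℝ) (hepos : ∀ i, 0 < e i) (u v : Fin k → Fin m) :
    0 ≤ dV e u v := by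
  rcases eq_or_ne u v with rfl | h
  · rw [dV_self]
  · rw [dV, dif_neg h]; exact le_of_lt (hepos _)

lemma dV_lt (e : Fin k → ℝ) (he : StrictMono e) (hepos : ∀ i, 0 < e i)
    {u v : Fin k → Fin m} {i : Fin k} (hge : ∀ i', i ≤ i' → u i' = v i') :
    dV e u v < e i := by
  rcases eq_or_ne u v with rfl | h
  · rw [dV_self]; exact hepos i
  · rw [dV, dif_neg h]
    apply he
    by_contra hle
    push_neg at hle
    have hmem := Finset.max'_mem (levelSet u v) (levelSet_nonempty h)
    rw [mem_levelSet] at hmem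
    exact hmem (hge _ hle)

lemma dV_pos (e : Fin k → ℝ) (hepos : ∀ i, 0 < e i) {u v : Fin k → Fin m} (h : u ≠ v) :
    0 < dV e u v := by
  rw [dV, dif_neg h]; exact hepos _

lemma dV_ultra (e : Fin k → ℝ) (he : StrictMono e) (hepos : ∀ i, 0 < e i)
    (u v w : Fin k → Fin m) : dV e u w ≤ max (dV e u v) (dV e v w) := by
  rcases eq_or_ne u w with rfl | h
  · rw [dV_self]
    exact le_max_of_le_left (dV_nonneg e hepos _ _)
  · rw [dV, dif_neg h]
    set i := (levelSet u w).max' (levelSet_nonempty h) with hi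
    have himem : u i ≠ w i := by
      have := Finset.max'_mem (levelSet u w) (levelSet_nonempty h)
      rwa [mem_levelSet] at this
    by_cases huv : u i = v i
    · have hvw : v i ≠ w i := fun hc => himem (huv.trans hc)
      have hne : v ≠ w := fun hc => hvw (by rw [hc])
      apply le_max_of_le_right
      rw [dV, dif_neg hne]
      exact he.monotone (Finset.le_max' _ _ (mem_levelSet.mpr hvw))
    · have hne : u ≠ v := fun hc => huv (by rw [hc])
      apply le_max_of_le_left
      rw [dV, dif_neg hne]
      exact he.monotone (Finset.le_max' _ _ (mem_levelSet.mpr huv))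

/-- number of level-`i` classes preceding that of `u`. -/
noncomputable def rank (r : (Fin k → Fin m) → (Fin k → Fin m) → Prop)
    (u : Fin k → Fin m) (i : Fin k) : ℕ :=
  (Finset.univ.filter fun c : Fin m => r (Function.update u i c) u).card

lemma rank_zero_of_min {r : (Fin k → Fin m) → (Fin k → Fin m) → Prop}
    (hsto : IsSTO r) {u : Fin k → Fin m} (hmin : ∀ w, w ≠ u → r u w) (i : Fin k) :
    rank r u i = 0 := by
  rw [rank, Finset.card_eq_zero, Finset.filter_eq_empty_iff]
  intro c _
  intro hc
  rcases eq_or_ne (Function.update u i c) u with heq | hne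
  · rw [heq] at hc; exact hsto.1 u hc
  · exact sto_asymm hsto (hmin _ hne) hc

lemma update_agree_above {u v : Fin k → Fin m} {i : Fin k} (c : Fin m)
    (hagree : ∀ i', i ≤ i' → u i' = v i') :
    ∀ i', i ≤ i' → Function.update u i c i' = Function.update v i c i' := by
  intro i' hi'
  rcases eq_or_ne i' i with rfl | hne
  · rw [Function.update_self, Function.update_self]
  · rw [Function.update_of_ne hne, Function.update_of_ne hne]
    exact hagree i' hi'

variable {e : Fin k → ℝ} {r : (Fin k → Fin m) → (Fin k → Fin m) → Prop}

lemma rank_congr_aux (he : StrictMono e) (hepos : ∀ i, 0 < e i)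
    (hr : IsConvexSTO (dV e) r) {u v : Fin k → Fin m} {i : Fin k}
    (hagree : ∀ i', i ≤ i' → u i' = v i') {c : Fin m}
    (hc : r (Function.update u i c) u) : r (Function.update v i c) v := by
  have hcu : c ≠ u i := by
    intro hcu
    rw [hcu, Function.update_eq_self] at hc
    exact hr.1.1 u hc
  have hcv : c ≠ v i := by rw [← hagree i le_rfl]; exact hcu
  have hd1 : dV e (Function.update u i c) u = e i := by
    apply dV_eq_of
    · rw [Function.update_self]; exact hcu
    · intro i' hi'; rw [Function.update_of_ne (ne_of_gt hi')]
  have hd2 : dV e u v < e i := dV_lt e he hepos hagree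
  have hd3 : dV e (Function.update u i c) (Function.update v i c) < e i :=
    dV_lt e he hepos (update_agree_above c hagree)
  have hd4 : dV e (Function.update u i c) v = e i := by
    apply dV_eq_of
    · rw [Function.update_self]; exact hcv
    · intro i' hi'
      rw [Function.update_of_ne (ne_of_gt hi')]
      exact hagree i' (le_of_lt hi')
  have step1 : r (Function.update u i c) v :=
    move_right (dV_symm e) hr hc (by rw [hd1]; exact hd2)
  exact move_left hr step1 (by rw [hd4]; exact hd3)

lemma rank_congr (he : StrictMono e) (hepos : ∀ i, 0 < e i)
    (hr : IsConvexSTO (dV e) r) {u v : Fin k → Fin m} {i : Fin k}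
    (hagree : ∀ i', i ≤ i' → u i' = v i') : rank r u i = rank r v i := by
  unfold rank
  congr 1
  apply Finset.filter_congr
  intro c _
  constructor
  · exact fun hc => rank_congr_aux he hepos hr hagree hc
  · exact fun hc => rank_congr_aux he hepos hr (fun i' hi' => (hagree i' hi').symm) hc

lemma step_exists (he : StrictMono e) (hepos : ∀ i, 0 < e i)
    (hr : IsConvexSTO (dV e) r) (u : Fin k → Fin m) (i : Fin k) (j : ℕ)
    (hrank : ∀ i', rank r u i' ≤ j) (hj : j + 2 ≤ m) :
    ∃ v, r u v ∧ dV e u v = e i ∧ ∀ i', rank r v i' ≤ j + 1 := by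
  have hsto := hr.1
  -- there is a class after `u`'s class at level `i`
  have hBne : ∃ c : Fin m, r u (Function.update u i c) := by
    by_contra hB
    push_neg at hB
    have hsub : (Finset.univ : Finset (Fin m)) ⊆
        (Finset.univ.filter fun c => r (Function.update u i c) u) ∪ {u i} := by
      intro c _
      rcases hsto.2.2 (Function.update u i c) u with h1 | h2 | h3
      · exact Finset.mem_union_left _ (Finset.mem_filter.mpr ⟨Finset.mem_univ _, h1⟩)
      · have hcui : c = u i := by
          have := congrFun h2 i
          rwa [Function.update_self] at this
        exact Finset.mem_union_right _ (by simp [hcui])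
      · exact absurd h3 (hB c)
    have hcard := Finset.card_le_card hsub
    have h1 : ((Finset.univ.filter fun c => r (Function.update u i c) u) ∪ {u i}).card ≤
        rank r u i + 1 := by
      refine le_trans (Finset.card_union_le _ _) ?_
      simp [rank]
    simp only [Finset.card_univ, Fintype.card_fin] at hcard
    have := hrank i
    omega
  obtain ⟨c0, hc0⟩ := hBne
  have hc0ne : c0 ≠ u i := by
    intro hcc
    rw [hcc, Function.update_eq_self] at hc0
    exact hsto.1 u hc0
  -- the set of candidates for the next element
  set T : Finset (Fin k → Fin m) :=
    Finset.univ.filter fun v => r u v ∧ v i ≠ u i ∧ ∀ i', i < i' → v i' = u i' with hT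
  have hTne : T.Nonempty := by
    refine ⟨Function.update u i c0, ?_⟩
    rw [hT, Finset.mem_filter]
    refine ⟨Finset.mem_univ _, hc0, ?_, ?_⟩
    · rw [Function.update_self]; exact hc0ne
    · intro i' hi'; rw [Function.update_of_ne (ne_of_gt hi')]
  obtain ⟨v, hvT, hvmin⟩ := exists_min hsto T hTne
  rw [hT, Finset.mem_filter] at hvT
  obtain ⟨-, hv1, hv2, hv3⟩ := hvT
  have hduv : dV e u v = e i := dV_eq_of e (Ne.symm hv2) (fun i' hi' => (hv3 i' hi').symm)
  refine ⟨v, hv1, hduv, ?_⟩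
  intro i'
  rcases lt_trichotomy i i' with hlt | heq | hgt
  · -- above the branching level the rank is unchanged
    have hag : ∀ i'', i' ≤ i'' → v i'' = u i'' := fun i'' hi'' =>
      hv3 i'' (lt_of_lt_of_le hlt hi'')
    rw [rank_congr he hepos hr hag]
    exact le_trans (hrank i') (Nat.le_succ j)
  · -- at the branching level the rank increases by at most one
    subst heq
    have hsub : (Finset.univ.filter fun c : Fin m => r (Function.update v i c) v) ⊆
        (Finset.univ.filter fun c : Fin m => r (Function.update u i c) u) ∪ {u i} := by
      intro c hc
      rw [Finset.mem_filter] at hc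
      have hcv : r (Function.update v i c) v := hc.2
      have hcvi : c ≠ v i := by
        intro hcc
        rw [hcc, Function.update_eq_self] at hcv
        exact hsto.1 v hcv
      rcases hsto.2.2 (Function.update u i c) u with h1 | h2 | h3
      · exact Finset.mem_union_left _ (Finset.mem_filter.mpr ⟨Finset.mem_univ _, h1⟩)
      · have hcui : c = u i := by
          have := congrFun h2 i
          rwa [Function.update_self] at this
        exact Finset.mem_union_right _ (by simp [hcui])
      · exfalso
        have hcui : c ≠ u i := by
          intro hcc
          rw [hcc, Function.update_eq_self] at h3
          exact hsto.1 u h3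
        have hwT : Function.update u i c ∈ T := by
          rw [hT, Finset.mem_filter]
          refine ⟨Finset.mem_univ _, h3, ?_, ?_⟩
          · rw [Function.update_self]; exact hcui
          · intro i'' hi''; rw [Function.update_of_ne (ne_of_gt hi'')]
        rcases eq_or_ne (Function.update u i c) v with heq2 | hne2
        · have : c = v i := by
            have := congrFun heq2 i
            rwa [Function.update_self] at this
          exact hcvi this
        · have hrvw : r v (Function.update u i c) := hvmin _ hwT hne2
          have hag2 : ∀ i'', i ≤ i'' →
              Function.update v i c i'' = Function.update u i c i'' := by
            intro i'' hi''
            rcases eq_or_ne i'' i with rfl | hne3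
            · rw [Function.update_self, Function.update_self]
            · rw [Function.update_of_ne hne3, Function.update_of_ne hne3]
              exact hv3 i'' (lt_of_le_of_ne hi'' (Ne.symm hne3))
          have hd5 : dV e (Function.update v i c) (Function.update u i c) < e i :=
            dV_lt e he hepos hag2
          have hd6 : dV e (Function.update v i c) v = e i := by
            apply dV_eq_of
            · rw [Function.update_self]; exact hcvi
            · intro i'' hi''; rw [Function.update_of_ne (ne_of_gt hi'')]
          have : r (Function.update u i c) v :=
            move_left hr hcv (by rw [hd6]; exact hd5)
          exact sto_asymm hsto hrvw this
    have hcard := Finset.card_le_card hsub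
    have h1 : ((Finset.univ.filter fun c : Fin m => r (Function.update u i c) u) ∪ {u i}).card ≤
        rank r u i + 1 := by
      refine le_trans (Finset.card_union_le _ _) ?_
      simp [rank]
    have := hrank i
    rw [rank]
    omega
  · -- below the branching level the new point is minimal in its class
    suffices h0 : rank r v i' = 0 by rw [h0]; exact Nat.zero_le _
    rw [rank, Finset.card_eq_zero, Finset.filter_eq_empty_iff]
    intro c _
    intro hcv
    have hcvi : c ≠ v i' := by
      intro hcc
      rw [hcc, Function.update_eq_self] at hcv
      exact hsto.1 v hcv
    set w := Function.update v i' c with hw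
    rcases hsto.2.2 u w with h1 | h2 | h3
    · -- `w` lies in `T`, contradicting minimality of `v`
      have hwT : w ∈ T := by
        rw [hT, Finset.mem_filter]
        refine ⟨Finset.mem_univ _, h1, ?_, ?_⟩
        · rw [hw, Function.update_of_ne (ne_of_gt hgt)]; exact hv2
        · intro i'' hi''
          rw [hw, Function.update_of_ne (ne_of_gt (lt_trans hgt hi''))]
          exact hv3 i'' hi''
      rcases eq_or_ne w v with heq2 | hne2
      · have : c = v i' := by
          have := congrFun heq2 i'
          rwa [hw, Function.update_self] at this
        exact hcvi this
      · exact sto_asymm hsto (hvmin _ hwT hne2) hcv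
    · -- impossible : `w` agrees with `v` at level `i`
      have : u i = v i := by
        have := congrFun h2 i
        rw [hw, Function.update_of_ne (ne_of_gt hgt)] at this
        exact this
      exact hv2 this.symm
    · -- `w` before `u` before `v` contradicts convexity
      have hconv := hr.2 w u v h3 hv1
      have hd7 : dV e w v = e i' := by
        apply dV_eq_of
        · rw [hw, Function.update_self]; exact hcvi
        · intro i'' hi''; rw [hw, Function.update_of_ne (ne_of_gt hi'')]
      have hd8 : dV e u v = e i := hduv
      have := hconv.2
      rw [hd7, hd8] at this
      exact absurd (lt_of_le_of_lt this (he hgt)) (lt_irrefl _)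

/-- the greedy chain. -/
noncomputable def chainF (he : StrictMono e) (hepos : ∀ i, 0 < e i)
    (hr : IsConvexSTO (dV e) r) (y0 : Fin k → Fin m)
    (hy0 : ∀ i', rank r y0 i' ≤ 0) (L : ∀ j : ℕ, j + 2 ≤ m → Fin k) :
    ∀ j : ℕ, {v : Fin k → Fin m // ∀ i', rank r v i' ≤ j}
  | 0 => ⟨y0, hy0⟩
  | (j+1) =>
    if h : j + 2 ≤ m then
      ⟨(step_exists he hepos hr (chainF he hepos hr y0 hy0 L j).1 (L j h) j
          (chainF he hepos hr y0 hy0 L j).2 h).choose,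
        (step_exists he hepos hr (chainF he hepos hr y0 hy0 L j).1 (L j h) j
          (chainF he hepos hr y0 hy0 L j).2 h).choose_spec.2.2⟩
    else
      ⟨(chainF he hepos hr y0 hy0 L j).1,
        fun i' => le_trans ((chainF he hepos hr y0 hy0 L j).2 i') (Nat.le_succ j)⟩

lemma chainF_succ (he : StrictMono e) (hepos : ∀ i, 0 < e i)
    (hr : IsConvexSTO (dV e) r) (y0 : Fin k → Fin m)
    (hy0 : ∀ i', rank r y0 i' ≤ 0) (L : ∀ j : ℕ, j + 2 ≤ m → Fin k)
    (j : ℕ) (h : j + 2 ≤ m) :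
    r (chainF he hepos hr y0 hy0 L j).1 (chainF he hepos hr y0 hy0 L (j+1)).1 ∧
      dV e (chainF he hepos hr y0 hy0 L j).1 (chainF he hepos hr y0 hy0 L (j+1)).1 =
        e (L j h) := by
  have hspec := (step_exists he hepos hr (chainF he hepos hr y0 hy0 L j).1 (L j h) j
      (chainF he hepos hr y0 hy0 L j).2 h).choose_spec
  have hval : (chainF he hepos hr y0 hy0 L (j+1)).1 =
      (step_exists he hepos hr (chainF he hepos hr y0 hy0 L j).1 (L j h) j
        (chainF he hepos hr y0 hy0 L j).2 h).choose := by
    rw [chainF, dif_pos h]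
  rw [hval]
  exact ⟨hspec.1, hspec.2.1⟩

lemma exists_chain (hne : Nonempty (Fin k → Fin m)) (he : StrictMono e)
    (hepos : ∀ i, 0 < e i) (hr : IsConvexSTO (dV e) r)
    (L : ∀ j : ℕ, j + 2 ≤ m → Fin k) :
    ∃ y : ℕ → (Fin k → Fin m), ∀ j (h : j + 2 ≤ m),
      r (y j) (y (j+1)) ∧ dV e (y j) (y (j+1)) = e (L j h) := by
  haveI := hne
  obtain ⟨y0, -, hy0min⟩ := exists_min hr.1 Finset.univ Finset.univ_nonempty
  have hy0 : ∀ i', rank r y0 i' ≤ 0 := fun i' =>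
    le_of_eq (rank_zero_of_min hr.1 (fun w hw => hy0min w (Finset.mem_univ _) hw) i')
  exact ⟨fun j => (chainF he hepos hr y0 hy0 L j).1, fun j h =>
    chainF_succ he hepos hr y0 hy0 L j h⟩

end Greedy

end OrdUltraAux

/-- Ordering property for the class of finite convexly ordered ultrametric spaces with
distances in `S`. -/
theorem ordering_property_convexly_ordered_ultrametric
    (S : Set ℝ) (hSpos : ∀ s ∈ S, 0 < s) (X : FinUltra S) :
    ∃ Y : FinUltra S,
      ∀ (rX : Fin X.n → Fin X.n → Prop) (rY : Fin Y.n → Fin Y.n → Prop),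
        IsConvexSTO X.d rX → IsConvexSTO Y.d rY →
          ∃ f : Fin X.n → Fin Y.n,
            (∀ a b, Y.d (f a) (f b) = X.d a b) ∧ ∀ a b, rX a b → rY (f a) (f b) := by
  classical
  open OrdUltraAux Finset in
  -- the set of distances of `X`
  set D : Finset ℝ := Finset.image (fun p : Fin X.n × Fin X.n => X.d p.1 p.2)
      (Finset.univ.filter fun p : Fin X.n × Fin X.n => p.1 ≠ p.2) with hD
  have hDS : ∀ s ∈ D, s ∈ S := by
    intro s hs
    rw [hD, Finset.mem_image] at hs
    obtain ⟨p, hp, rfl⟩ := hs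
    exact X.d_mem _ _ (Finset.mem_filter.mp hp).2
  have hDpos : ∀ s ∈ D, 0 < s := fun s hs => hSpos s (hDS s hs)
  set k := D.card with hk
  set eIso : Fin k ≃o {s // s ∈ D} := D.orderIsoOfFin rfl with heIso
  set e : Fin k → ℝ := fun i => (eIso i : ℝ) with hedef
  have he : StrictMono e := by
    intro i j hij
    exact_mod_cast eIso.strictMono hij
  have heD : ∀ i, e i ∈ D := fun i => (eIso i).2
  have hepos : ∀ i, 0 < e i := fun i => hDpos _ (heD i)
  set φ : (Fin k → Fin X.n) ≃ Fin (X.n ^ k) := finFunctionFinEquiv with hφ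
  have hdVmem : ∀ u v : Fin k → Fin X.n, u ≠ v → dV e u v ∈ S := by
    intro u v huv
    rw [dV, dif_neg huv]
    exact hDS _ (heD _)
  refine ⟨{ n := X.n ^ k
            d := fun a b => dV e (φ.symm a) (φ.symm b)
            d_self := fun a => dV_self e _
            d_symm := fun a b => dV_symm e _ _
            d_mem := fun a b hab => hdVmem _ _ (fun hc => hab (φ.symm.injective hc))
            ultra := fun a b c => dV_ultra e he hepos _ _ _ }, ?_⟩
  intro rX rY hrX hrY
  -- transport `rY` to the function space
  set rV : (Fin k → Fin X.n) → (Fin k → Fin X.n) → Prop :=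
    fun u v => rY (φ u) (φ v) with hrVdef
  have hrV : IsConvexSTO (dV e) rV := by
    constructor
    · refine ⟨fun u h => hrY.1.1 _ h, fun u v w h1 h2 => hrY.1.2.1 _ _ _ h1 h2, ?_⟩
      intro u v
      rcases hrY.1.2.2 (φ u) (φ v) with h | h | h
      · exact Or.inl h
      · exact Or.inr (Or.inl (φ.injective h))
      · exact Or.inr (Or.inr h)
    · intro u v w h1 h2
      have hcv := hrY.2 (φ u) (φ v) (φ w) h1 h2
      simpa [Equiv.symm_apply_apply] using hcv
  -- enumerate `X` in increasing `rX`-order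
  obtain ⟨x, hxmono⟩ := exists_enum (Fintype.card_fin X.n) hrX.1
  have hxlt : ∀ a b : Fin X.n, rX a b → x.symm a < x.symm b := by
    intro a b hab
    rcases lt_trichotomy (x.symm a) (x.symm b) with h | h | h
    · exact h
    · exfalso
      have : a = b := by
        have := congrArg x h
        rwa [Equiv.apply_symm_apply, Equiv.apply_symm_apply] at this
      subst this
      exact hrX.1.1 a hab
    · exfalso
      have := hxmono _ _ h
      rw [Equiv.apply_symm_apply, Equiv.apply_symm_apply] at this
      exact sto_asymm hrX.1 hab this
  -- consecutive levels for the greedy chain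
  have hLmem : ∀ (j : ℕ) (h : j + 2 ≤ X.n),
      X.d (x ⟨j, by omega⟩) (x ⟨j + 1, by omega⟩) ∈ D := by
    intro j h
    rw [hD, Finset.mem_image]
    refine ⟨(x ⟨j, by omega⟩, x ⟨j + 1, by omega⟩), ?_, rfl⟩
    rw [Finset.mem_filter]
    refine ⟨Finset.mem_univ _, ?_⟩
    intro hc
    have := x.injective hc
    simp only [Fin.mk.injEq] at this
    omega
  set L : ∀ j : ℕ, j + 2 ≤ X.n → Fin k :=
    fun j h => eIso.symm ⟨X.d (x ⟨j, by omega⟩) (x ⟨j + 1, by omega⟩), hLmem j h⟩ with hLdef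
  have hLe : ∀ (j : ℕ) (h : j + 2 ≤ X.n),
      e (L j h) = X.d (x ⟨j, by omega⟩) (x ⟨j + 1, by omega⟩) := by
    intro j h
    rw [hLdef, hedef]
    simp only [OrderIso.apply_symm_apply]
  -- the function space is nonempty
  have hne : Nonempty (Fin k → Fin X.n) := by
    rcases Nat.eq_zero_or_pos X.n with h0 | hpos
    · have hk0 : k = 0 := by
        rw [hk, hD]
        have : (Finset.univ.filter fun p : Fin X.n × Fin X.n => p.1 ≠ p.2) = ∅ := by
          apply Finset.eq_empty_of_forall_notMem
          intro p hp
          exact absurd p.1.isLt (by omega)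
        rw [this]
        simp
      exact ⟨fun i => absurd i.isLt (by omega)⟩
    · exact ⟨fun _ => ⟨0, hpos⟩⟩
  -- the greedy chain in the function space
  obtain ⟨y, hy⟩ := exists_chain hne he hepos hrV L
  have hymono : ∀ a b : ℕ, a < b → b + 1 ≤ X.n → rV (y a) (y b) := by
    intro a b
    induction b with
    | zero => omega
    | succ b ih =>
      intro hab hbm
      rcases Nat.lt_succ_iff_lt_or_eq.mp hab with h' | h'
      · exact hrV.1.2.1 _ _ _ (ih h' (by omega)) ((hy b (by omega)).1)
      · subst h'
        exact (hy a (by omega)).1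
  set yF : Fin X.n → (Fin k → Fin X.n) := fun j => y j with hyF
  have hyFmono : ∀ i j : Fin X.n, (i : ℕ) < (j : ℕ) → rV (yF i) (yF j) :=
    fun i j h => hymono i j h (Nat.succ_le_of_lt j.isLt)
  have hxmono' : ∀ i j : Fin X.n, (i : ℕ) < (j : ℕ) → rX (x i) (x j) :=
    fun i j h => hxmono i j h
  have hcons : ∀ (j : ℕ) (h : j + 1 < X.n),
      X.d (x ⟨j, Nat.lt_of_succ_lt h⟩) (x ⟨j + 1, h⟩) =
        dV e (yF ⟨j, Nat.lt_of_succ_lt h⟩) (yF ⟨j + 1, h⟩) := by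
    intro j h
    have h2 : j + 2 ≤ X.n := h
    have := (hy j h2).2
    rw [hLe j h2] at this
    exact this.symm
  have hdist := chain_dist_eq (dV e) rV hrX X.ultra hrV (dV_ultra e he hepos)
    (fun i => x i) yF hxmono' hyFmono hcons
  -- the embedding
  refine ⟨fun a => φ (yF (x.symm a)), ?_, ?_⟩
  · intro a b
    show dV e (φ.symm (φ (yF (x.symm a)))) (φ.symm (φ (yF (x.symm b)))) = X.d a b
    rw [Equiv.symm_apply_apply, Equiv.symm_apply_apply]
    rcases lt_trichotomy (x.symm a) (x.symm b) with h | h | h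
    · rw [← hdist _ _ h]
      simp only [Equiv.apply_symm_apply]
    · have hab : a = b := by
        have := congrArg x h
        rwa [Equiv.apply_symm_apply, Equiv.apply_symm_apply] at this
      subst hab
      rw [h, dV_self, X.d_self]
    · rw [dV_symm, ← hdist _ _ h]
      simp only [Equiv.apply_symm_apply]
      exact X.d_symm b a
  · intro a b hab
    exact hyFmono _ _ (hxlt a b hab)
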